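/- There exists a Debreu separable preordered space with no countable multi-utility; concretely, X = [0,1] ∪ [2,3] with x ≼ y iff (x,y ∈ [0,1] and x ≤ y) or (x ∈ [2,3], y ∈ [0,1], and x−2 < y) (together with reflexivity) is Debreu separable but has no countable multi-utility. -/
import Mathlib


open Set

/-- The ground set `[0,1] ∪ [2,3]`. -/
def X6 : Type := {x : ℝ // x ∈ Icc (0:ℝ) 1 ∪ Icc (2:ℝ) 3}

/-- The preorder: `x ≼ y` iff (`x,y ∈ [0,1]` and `x ≤ y`) or
(`x ∈ [2,3]`, `y ∈ [0,1]` and `x - 2 < y`), together with reflexivity. -/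
def le6 (x y : X6) : Prop :=
  x = y ∨ (x.1 ∈ Icc (0:ℝ) 1 ∧ y.1 ∈ Icc (0:ℝ) 1 ∧ x.1 ≤ y.1) ∨
    (x.1 ∈ Icc (2:ℝ) 3 ∧ y.1 ∈ Icc (0:ℝ) 1 ∧ x.1 - 2 < y.1)

/-- The lower copy of a point `t ∈ [0,1]`. -/
def A6 (t : ℝ) (ht : t ∈ Icc (0:ℝ) 1) : X6 := ⟨t, Or.inl ht⟩

/-- The upper copy `t + 2 ∈ [2,3]` of a point `t ∈ [0,1]`. -/
def B6 (t : ℝ) (ht : t ∈ Icc (0:ℝ) 1) : X6 :=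
  ⟨t + 2, Or.inr ⟨by linarith [ht.1], by linarith [ht.2]⟩⟩

lemma not_both (r : ℝ) (h1 : r ∈ Icc (0:ℝ) 1) (h2 : r ∈ Icc (2:ℝ) 3) : False := by
  have := h1.2; have := h2.1; linarith

lemma A6_val (t : ℝ) (ht : t ∈ Icc (0:ℝ) 1) : (A6 t ht).1 = t := rfl
lemma B6_val (t : ℝ) (ht : t ∈ Icc (0:ℝ) 1) : (B6 t ht).1 = t + 2 := rfl

lemma not_le6_BA (t : ℝ) (ht : t ∈ Icc (0:ℝ) 1) : ¬ le6 (B6 t ht) (A6 t ht) := by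
  rintro (h | ⟨h1, _, _⟩ | ⟨_, _, h3⟩)
  · have : t + 2 = t := congrArg Subtype.val h
    linarith
  · rw [B6_val] at h1
    exact not_both _ h1 ⟨by linarith [ht.1], by linarith [ht.2]⟩
  · rw [A6_val, B6_val] at h3; linarith

lemma le6_BA_of_lt (t s : ℝ) (ht : t ∈ Icc (0:ℝ) 1) (hs : s ∈ Icc (0:ℝ) 1)
    (hts : t < s) : le6 (B6 t ht) (A6 s hs) := by
  refine Or.inr (Or.inr ⟨?_, hs, ?_⟩) <;> rw [B6_val]
  · exact ⟨by linarith [ht.1], by linarith [ht.2]⟩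
  · rw [A6_val]; linarith

/-- `(X6, le6)` is a Debreu separable preorder with no countable multi-utility. -/
theorem debreu_separable_without_countable_multiutility :
    (∀ x, le6 x x) ∧ (∀ x y z, le6 x y → le6 y z → le6 x z) ∧
    (∃ D : Set X6, D.Countable ∧
      ∀ x y, le6 x y → ¬ le6 y x → ∃ d ∈ D, le6 x d ∧ le6 d y) ∧
    ¬ ∃ u : ℕ → X6 → ℝ, ∀ x y, le6 x y ↔ ∀ n, u n x ≤ u n y := by
  refine ⟨fun x => Or.inl rfl, ?_, ?_, ?_⟩
  · -- transitivity
    rintro x y z (rfl | hxy | hxy) hyz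
    · exact hyz
    · rcases hyz with rfl | hyz | hyz
      · exact Or.inr (Or.inl hxy)
      · exact Or.inr (Or.inl ⟨hxy.1, hyz.2.1, le_trans hxy.2.2 hyz.2.2⟩)
      · exact absurd hxy.2.1 (fun h => not_both _ h hyz.1)
    · rcases hyz with rfl | hyz | hyz
      · exact Or.inr (Or.inr hxy)
      · exact Or.inr (Or.inr ⟨hxy.1, hyz.2.1, lt_of_lt_of_le hxy.2.2 hyz.2.2⟩)
      · exact absurd hxy.2.1 (fun h => not_both _ h hyz.1)
  · -- Debreu separability with D = rationals
    refine ⟨{d : X6 | ∃ q : ℚ, (q : ℝ) = d.1}, ?_, ?_⟩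
    · have : {d : X6 | ∃ q : ℚ, (q : ℝ) = d.1}
          = (fun d : X6 => d.1) ⁻¹' (Set.range ((↑) : ℚ → ℝ)) := by
        ext d; simp [Set.range]
      rw [this]
      exact (Set.countable_range _).preimage Subtype.val_injective
    · rintro x y (rfl | hxy | hxy) hyx
      · exact absurd (Or.inl rfl) hyx
      · obtain ⟨hx, hy, hle⟩ := hxy
        have hlt : x.1 < y.1 := by
          rcases lt_or_ge x.1 y.1 with h | h
          · exact h
          · exact absurd (Or.inr (Or.inl ⟨hy, hx, h⟩)) hyx
        obtain ⟨q, hq1, hq2⟩ := exists_rat_btwn hlt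
        refine ⟨⟨q, Or.inl ⟨by linarith [hx.1], by linarith [hy.2]⟩⟩, ⟨q, rfl⟩,
          Or.inr (Or.inl ⟨hx, ⟨by linarith [hx.1], by linarith [hy.2]⟩, le_of_lt hq1⟩),
          Or.inr (Or.inl ⟨⟨by linarith [hx.1], by linarith [hy.2]⟩, hy, le_of_lt hq2⟩)⟩
      · obtain ⟨hx, hy, hlt⟩ := hxy
        obtain ⟨q, hq1, hq2⟩ := exists_rat_btwn hlt
        have hq01 : (q : ℝ) ∈ Icc (0:ℝ) 1 := ⟨by linarith [hx.1], by linarith [hy.2]⟩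
        exact ⟨⟨q, Or.inl hq01⟩, ⟨q, rfl⟩,
          Or.inr (Or.inr ⟨hx, hq01, hq1⟩),
          Or.inr (Or.inl ⟨hq01, hy, le_of_lt hq2⟩)⟩
  · -- no countable multi-utility
    rintro ⟨u, hu⟩
    set S : ℕ → Set ℝ :=
      fun n => {t | ∃ ht : t ∈ Icc (0:ℝ) 1, u n (A6 t ht) < u n (B6 t ht)} with hS
    have hcover : Icc (0:ℝ) 1 ⊆ ⋃ n, S n := by
      intro t ht
      have h1 : ¬ ∀ n, u n (B6 t ht) ≤ u n (A6 t ht) :=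
        fun h => not_le6_BA t ht ((hu _ _).2 h)
      push_neg at h1
      obtain ⟨n, hn⟩ := h1
      exact Set.mem_iUnion.2 ⟨n, ht, hn⟩
    have hIcc : ¬ (Icc (0:ℝ) 1).Countable := by
      intro h
      have h2 : Cardinal.mk (Icc (0:ℝ) 1) ≤ Cardinal.aleph0 :=
        Cardinal.mk_le_aleph0_iff.2 (Set.countable_coe_iff.2 h)
      rw [Cardinal.mk_Icc_real (show (0:ℝ) < 1 by norm_num)] at h2
      exact absurd h2 (not_le.2 Cardinal.aleph0_lt_continuum)
    have hex : ∃ n, ¬ (S n).Countable := by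
      by_contra h
      push_neg at h
      exact hIcc ((Set.countable_iUnion h).mono hcover)
    obtain ⟨n, hn⟩ := hex
    apply hn
    -- build injection from S n into ℚ
    classical
    have hf : ∀ t ∈ S n, ∃ q : ℚ,
        ∀ ht : t ∈ Icc (0:ℝ) 1, u n (A6 t ht) < (q:ℝ) ∧ (q:ℝ) < u n (B6 t ht) := by
      rintro t ⟨ht, hlt⟩
      obtain ⟨q, hq1, hq2⟩ := exists_rat_btwn hlt
      exact ⟨q, fun ht' => ⟨hq1, hq2⟩⟩
    choose! f hf1 using hf
    have key : ∀ t s, t ∈ S n → s ∈ S n → t < s → f t ≠ f s := by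
      intro t s htS hsS hts hfeq
      obtain ⟨ht, _⟩ := htS
      obtain ⟨hs, _⟩ := hsS
      have h1 := (hf1 t ⟨ht, by assumption⟩ ht).2
      have h2 := (hf1 s ⟨hs, by assumption⟩ hs).1
      have h3 : u n (B6 t ht) ≤ u n (A6 s hs) :=
        (hu _ _).1 (le6_BA_of_lt t s ht hs hts) n
      rw [hfeq] at h1
      have : (f s : ℝ) < (f s : ℝ) := by linarith
      exact lt_irrefl _ this
    have hinj : Set.InjOn f (S n) := by
      intro t htS s hsS hfeq
      rcases lt_trichotomy t s with h | h | h
      · exact absurd hfeq (key t s htS hsS h)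
      · exact h
      · exact absurd hfeq.symm (key s t hsS htS h)
    have : Function.Injective (fun t : S n => f t.1) := by
      intro a b hab
      exact Subtype.ext (hinj a.2 b.2 hab)
    rw [← Set.countable_coe_iff]
    exact this.countable
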